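/- Let (U,≤) be a countable past-finite causal set realizing all one-point stem-extensions of finite stems, and let F ⊆ U be finite. Then (U \ F, ≤) also realizes all one-point stem-extensions of its finite stems; in particular (U \ F, ≤) is order-isomorphic to (U,≤). -/

import Mathlib

/-- A stem (downward closed subset) of a poset. -/
def IsStemIn {U : Type*} [PartialOrder U] (A : Set U) : Prop :=
  ∀ ⦃y x : U⦄, x ∈ A → y ≤ x → y ∈ A

/-- `U` realizes all one-point stem-extensions of finite stems of `U`:
whenever `A` is a finite stem of `U` and `B` is a finite poset containing (an
isomorphic copy of) `A` as a stem with `|B| = |A| + 1`, there is a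
stem-embedding `g : B → U` fixing `A` pointwise. -/
def RealizesOnePointExt (U : Type*) [PartialOrder U] : Prop :=
  ∀ (A : Set U), A.Finite → IsStemIn A →
    ∀ (B : Type) (_ : PartialOrder B) (f : A ↪o B),
      (∀ (b : B) (a : A), b ≤ f a → ∃ a' : A, f a' = b) →
      Nat.card B = A.ncard + 1 →
      ∃ g : B ↪o U, (∀ a : A, g (f a) = (a : U)) ∧
        ∀ (u : U) (b : B), u ≤ g b → ∃ b' : B, g b' = u


noncomputable section Aux

/-- A `Type 0` copy of a finite poset. -/
structure OrderCopy (B : Type*) [PartialOrder B] [Fintype B] : Type where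
  k : Fin (Fintype.card B)

namespace OrderCopy

variable {B : Type*} [PartialOrder B] [Fintype B]

instance : PartialOrder (OrderCopy B) :=
  PartialOrder.lift (fun x => (Fintype.equivFin B).symm x.k)
    (fun x y h => by cases x; cases y; simpa using (Fintype.equivFin B).symm.injective h)

def iso : B ≃o OrderCopy B where
  toFun b := ⟨Fintype.equivFin B b⟩
  invFun x := (Fintype.equivFin B).symm x.k
  left_inv b := by simp
  right_inv x := by cases x; simp
  map_rel_iff' {a b} := by
    change (Fintype.equivFin B).symm _ ≤ (Fintype.equivFin B).symm _ ↔ _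
    simp

lemma card_eq : Nat.card (OrderCopy B) = Nat.card B :=
  Nat.card_congr (iso (B := B)).toEquiv.symm

end OrderCopy

/-- `RealizesOnePointExt` applied to a `B` in an arbitrary universe. -/
lemma realizes_apply {U : Type*} [PartialOrder U] (h : RealizesOnePointExt U)
    (A : Set U) (hfin : A.Finite) (hstem : IsStemIn A)
    (B : Type*) [PartialOrder B] [Finite B] (f : A ↪o B)
    (hst : ∀ (b : B) (a : A), b ≤ f a → ∃ a' : A, f a' = b)
    (hcard : Nat.card B = A.ncard + 1) :
    ∃ g : B ↪o U, (∀ a : A, g (f a) = (a : U)) ∧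
      ∀ (u : U) (b : B), u ≤ g b → ∃ b' : B, g b' = u := by
  have : Fintype B := Fintype.ofFinite B
  let e : B ≃o OrderCopy B := OrderCopy.iso
  let f' : A ↪o OrderCopy B := f.trans e.toOrderEmbedding
  have hst' : ∀ (b : OrderCopy B) (a : A), b ≤ f' a → ∃ a' : A, f' a' = b := by
    intro b a hb
    have : e.symm b ≤ f a := by
      have := e.symm.monotone hb
      simpa [f'] using this
    obtain ⟨a', ha'⟩ := hst _ a this
    refine ⟨a', ?_⟩
    have : e (f a') = e (e.symm b) := congrArg e ha'
    simpa [f'] using this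
  have hcard' : Nat.card (OrderCopy B) = A.ncard + 1 := by
    rw [OrderCopy.card_eq]; exact hcard
  obtain ⟨g0, hg0, hg0stem⟩ := h A hfin hstem (OrderCopy B) inferInstance f' hst' hcard'
  refine ⟨e.toOrderEmbedding.trans g0, ?_, ?_⟩
  · intro a
    have := hg0 a
    simpa [f'] using this
  · intro u b hu
    obtain ⟨b', hb'⟩ := hg0stem u (e b) (by simpa using hu)
    exact ⟨e.symm b', by simpa using hb'⟩

/-- Downward closure. -/
def dCl {P : Type*} [PartialOrder P] (X : Set P) : Set P := {u | ∃ x ∈ X, u ≤ x}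

lemma subset_dCl {P : Type*} [PartialOrder P] (X : Set P) : X ⊆ dCl X :=
  fun x hx => ⟨x, hx, le_rfl⟩

lemma dCl_stem {P : Type*} [PartialOrder P] (X : Set P) : IsStemIn (dCl X) := by
  rintro y x ⟨z, hz, hxz⟩ hyx
  exact ⟨z, hz, hyx.trans hxz⟩

lemma dCl_mono {P : Type*} [PartialOrder P] {X Y : Set P} (h : X ⊆ Y) : dCl X ⊆ dCl Y := by
  rintro u ⟨x, hx, hu⟩; exact ⟨x, h hx, hu⟩

lemma dCl_subset_of_stem {P : Type*} [PartialOrder P] {X Z : Set P} (h : X ⊆ Z)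
    (hZ : IsStemIn Z) : dCl X ⊆ Z := by
  rintro u ⟨x, hx, hu⟩; exact hZ (h hx) hu

lemma dCl_finite {P : Type*} [PartialOrder P] (hpf : ∀ x : P, {s : P | s ≤ x}.Finite)
    {X : Set P} (hX : X.Finite) : (dCl X).Finite := by
  have : dCl X = ⋃ x ∈ X, {s : P | s ≤ x} := by
    ext u; simp [dCl]
  rw [this]
  exact Set.Finite.biUnion hX fun x _ => hpf x

lemma nonempty_of_realizes {U : Type*} [PartialOrder U] (h : RealizesOnePointExt U) :
    Nonempty U := by
  have hst : IsStemIn (∅ : Set U) := by rintro y x hx; exact absurd hx (Set.notMem_empty x)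
  have femb : (∅ : Set U) ↪o PUnit.{1} :=
    ⟨⟨fun a => PUnit.unit, fun a => absurd a.2 (Set.notMem_empty _)⟩,
      fun {a} => absurd a.2 (Set.notMem_empty _)⟩
  obtain ⟨g, -, -⟩ := realizes_apply h ∅ Set.finite_empty hst PUnit femb
    (fun b a => absurd a.2 (Set.notMem_empty _)) (by simp)
  exact ⟨g PUnit.unit⟩

end Aux

noncomputable section AddPtSec

/-- The poset `P` with one extra point placed above the elements below `D`. -/
structure AddPt (P : Type*) (D : Set P) : Type _ where
  val : Option P

namespace AddPt

variable {P : Type*} [PartialOrder P] {D : Set P}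

instance : PartialOrder (AddPt P D) where
  le x y := match x.val, y.val with
    | some a, some b => a ≤ b
    | some a, none => ∃ d ∈ D, a ≤ d
    | none, none => True
    | none, some _ => False
  le_refl x := by rcases x with ⟨_ | a⟩ <;> simp [· ≤ ·]
  le_trans x y z hxy hyz := by
    rcases x with ⟨_ | a⟩ <;> rcases y with ⟨_ | b⟩ <;> rcases z with ⟨_ | c⟩ <;>
      simp_all [· ≤ ·]
    · obtain ⟨d, hd, hbd⟩ := hyz
      exact ⟨d, hd, hxy.trans hbd⟩
    · exact hxy.trans hyz
  le_antisymm x y hxy hyx := by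
    rcases x with ⟨_ | a⟩ <;> rcases y with ⟨_ | b⟩ <;> simp_all [· ≤ ·]
    exact le_antisymm hxy hyx

lemma some_le_some {a b : P} :
    (⟨some a⟩ : AddPt P D) ≤ ⟨some b⟩ ↔ a ≤ b := Iff.rfl

lemma some_le_none {a : P} :
    (⟨some a⟩ : AddPt P D) ≤ ⟨none⟩ ↔ ∃ d ∈ D, a ≤ d := Iff.rfl

lemma not_none_le_some {b : P} : ¬ (⟨none⟩ : AddPt P D) ≤ ⟨some b⟩ := fun h => h

instance [Finite P] : Finite (AddPt P D) := by
  have : Fintype P := Fintype.ofFinite P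
  exact Finite.of_injective (fun x => x.val) (fun x y h => by cases x; cases y; simpa using h)

lemma card_eq [Finite P] : Nat.card (AddPt P D) = Nat.card P + 1 := by
  have e : AddPt P D ≃ Option P :=
    ⟨fun x => x.val, fun o => ⟨o⟩, fun x => rfl, fun o => rfl⟩
  rw [Nat.card_congr e, Finite.card_option]

end AddPt

end AddPtSec

section Part1

theorem realizes_diff {U : Type*} [PartialOrder U]
    (hpf : ∀ x : U, {s : U | s ≤ x}.Finite)
    (hreal : RealizesOnePointExt U) (F : Set U) (hF : F.Finite) :
    RealizesOnePointExt {x : U // x ∉ F} := by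
  classical
  set S := {x : U // x ∉ F} with hS
  intro A hAfin hAstem B _inst f hstem hcard
  have hBfin : Finite B := by
    have hpos : 0 < Nat.card B := by rw [hcard]; omega
    exact (Nat.card_pos_iff.mp hpos).2
  have hAcard : Nat.card ↥A = A.ncard := Nat.card_coe_set_eq A
  have hRcard : (Set.range f).ncard = A.ncard := by
    rw [← Set.image_univ, Set.ncard_image_of_injective _ f.injective, Set.ncard_univ, hAcard]
  have hcompl : (Set.range f)ᶜ.ncard = 1 := by
    have h1 := Set.ncard_add_ncard_compl (Set.range f) (Set.toFinite _) (Set.toFinite _)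
    rw [hRcard, hcard] at h1
    omega
  obtain ⟨z, hzset⟩ := Set.ncard_eq_one.mp hcompl
  have hzR : z ∉ Set.range f := by
    have : z ∈ ({z} : Set B) := rfl
    rw [← hzset] at this; exact this
  have hz : ∀ b : B, b ∉ Set.range f → b = z := by
    intro b hb
    have : b ∈ ({z} : Set B) := hzset ▸ hb
    exact this
  have hzmax : ∀ a : ↥A, ¬ z ≤ f a := by
    intro a h
    obtain ⟨a', ha'⟩ := hstem z a h
    exact hzR ⟨a', ha'⟩
  set A₀ : Set U := Subtype.val '' A with hA₀
  have hA₀fin : A₀.Finite := hAfin.image _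
  set A2 : Set U := dCl (A₀ ∪ F) with hA2
  have hA2fin : A2.Finite := dCl_finite hpf (hA₀fin.union hF)
  have hA2stem : IsStemIn A2 := dCl_stem _
  have hA₀sub : A₀ ⊆ A2 := Set.Subset.trans Set.subset_union_left (subset_dCl _)
  have hFsub : F ⊆ A2 := Set.Subset.trans Set.subset_union_right (subset_dCl _)
  have hmemA2 : ∀ a : ↥A, ((a : S) : U) ∈ A2 := fun a => hA₀sub ⟨(a : S), a.2, rfl⟩
  set D : Set U := (fun a : ↥A => ((a : S) : U)) '' {a : ↥A | f a ≤ z} with hD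
  have hDsub : D ⊆ A2 := by
    rintro x ⟨a, -, rfl⟩
    exact hmemA2 a
  set Ds : Set ↥A2 := {a : ↥A2 | (a : U) ∈ D} with hDs
  set B2 := AddPt ↥A2 Ds with hB2
  haveI : Finite ↥A2 := hA2fin.to_subtype
  have hsub_le_none : ∀ (a : ↥A2), ((⟨some a⟩ : B2) ≤ ⟨none⟩ ↔ (a : U) ∈ dCl D) := by
    intro a
    rw [AddPt.some_le_none]
    constructor
    · rintro ⟨d, hd, hle⟩
      exact ⟨(d : U), hd, Subtype.coe_le_coe.mpr hle⟩
    · rintro ⟨x, hx, hle⟩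
      exact ⟨⟨x, hDsub hx⟩, hx, Subtype.coe_le_coe.mp hle⟩
  let f2 : A2 ↪o B2 :=
    ⟨⟨fun a => ⟨some a⟩, fun a b h => Option.some_injective _ (congrArg AddPt.val h)⟩, Iff.rfl⟩
  have hst2 : ∀ (b : B2) (a : ↥A2), b ≤ f2 a → ∃ a' : ↥A2, f2 a' = b := by
    rintro ⟨_ | c⟩ a hb
    · exact absurd hb AddPt.not_none_le_some
    · exact ⟨c, rfl⟩
  have hcard2 : Nat.card B2 = A2.ncard + 1 := by
    rw [hB2, AddPt.card_eq, Nat.card_coe_set_eq]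
  obtain ⟨g2, hg2fix, hg2stem⟩ := realizes_apply hreal A2 hA2fin hA2stem B2 f2 hst2 hcard2
  set w : U := g2 ⟨none⟩ with hw
  have hg2some : ∀ a : ↥A2, g2 ⟨some a⟩ = ↑a := fun a => hg2fix a
  have hwA2 : w ∉ A2 := by
    intro hmem
    have h1 : g2 ⟨some ⟨w, hmem⟩⟩ = g2 ⟨none⟩ := (hg2some ⟨w, hmem⟩).trans rfl
    have h2 := congrArg AddPt.val (g2.injective h1)
    simp at h2
  have hwF : w ∉ F := fun h => hwA2 (hFsub h)
  have hlew : ∀ u : U, u ∈ A2 → (u ≤ w ↔ u ∈ dCl D) := by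
    intro u hu
    have h1 : u = g2 ⟨some ⟨u, hu⟩⟩ := (hg2some ⟨u, hu⟩).symm
    conv_lhs => rw [h1, hw]
    rw [g2.le_iff_le]
    exact hsub_le_none ⟨u, hu⟩
  have hwnle : ∀ u : U, u ∈ A2 → ¬ w ≤ u := by
    intro u hu h
    have h1 : u = g2 ⟨some ⟨u, hu⟩⟩ := (hg2some ⟨u, hu⟩).symm
    rw [h1, hw, g2.le_iff_le] at h
    exact AddPt.not_none_le_some h
  have hpastw : ∀ u : U, u ≤ w → u = w ∨ u ∈ dCl D := by
    intro u hu
    obtain ⟨b', hb'⟩ := hg2stem u ⟨none⟩ hu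
    rcases b' with ⟨_ | a⟩
    · left; rw [← hb', hw]
    · right
      rw [hg2some a] at hb'
      have hu2 : u ∈ A2 := hb' ▸ a.2
      exact (hlew u hu2).mp hu
  have hDiff : ∀ a : ↥A, (((a : S) : U) ∈ dCl D ↔ f a ≤ z) := by
    intro a
    constructor
    · rintro ⟨x, ⟨a₁, ha₁, rfl⟩, hle⟩
      have h1 : (a : S) ≤ (a₁ : S) := Subtype.coe_le_coe.mp hle
      have h2 : a ≤ a₁ := Subtype.coe_le_coe.mp h1
      exact (f.monotone h2).trans ha₁
    · intro h
      exact subset_dCl _ ⟨a, h, rfl⟩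
  set ψ : B → S := fun b =>
    if h : ∃ a : ↥A, f a = b then ((Classical.choose h : ↥A) : S) else ⟨w, hwF⟩ with hψ
  have hψf : ∀ a : ↥A, ψ (f a) = ↑a := by
    intro a
    have hex : ∃ a' : ↥A, f a' = f a := ⟨a, rfl⟩
    rw [hψ]; dsimp only
    rw [dif_pos hex]
    exact congrArg _ (f.injective (Classical.choose_spec hex))
  have hψnr : ∀ b : B, b ∉ Set.range f → ψ b = ⟨w, hwF⟩ := by
    intro b hb
    rw [hψ]; dsimp only
    rw [dif_neg]
    rintro ⟨a, ha⟩
    exact hb ⟨a, ha⟩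
  have hψz : ψ z = ⟨w, hwF⟩ := hψnr z hzR
  have key : ∀ b b' : B, b ≤ b' ↔ ψ b ≤ ψ b' := by
    intro b b'
    by_cases hb : ∃ a : ↥A, f a = b <;> by_cases hb' : ∃ a : ↥A, f a = b'
    · obtain ⟨a, rfl⟩ := hb
      obtain ⟨a', rfl⟩ := hb'
      rw [hψf, hψf, f.le_iff_le]
      exact Subtype.coe_le_coe.symm
    · obtain ⟨a, rfl⟩ := hb
      have hbz : b' = z := hz b' (fun ⟨a', ha'⟩ => hb' ⟨a', ha'⟩)
      subst hbz
      rw [hψf, hψz]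
      have h1 : ((a : S) ≤ (⟨w, hwF⟩ : S)) ↔ ((a : S) : U) ≤ w := Iff.rfl
      rw [h1, hlew _ (hmemA2 a), hDiff]
    · obtain ⟨a, rfl⟩ := hb'
      have hbz : b = z := hz b (fun ⟨a', ha'⟩ => hb ⟨a', ha'⟩)
      subst hbz
      rw [hψf, hψz]
      constructor
      · intro h; exact absurd h (hzmax a)
      · intro h
        exact absurd (show w ≤ ((a : S) : U) from h) (hwnle _ (hmemA2 a))
    · have h1 : b = z := hz b (fun ⟨a', ha'⟩ => hb ⟨a', ha'⟩)
      have h2 : b' = z := hz b' (fun ⟨a', ha'⟩ => hb' ⟨a', ha'⟩)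
      subst h1; subst h2
      simp
  have hinj : Function.Injective ψ := by
    intro b b' h
    exact le_antisymm ((key b b').mpr h.le) ((key b' b).mpr h.ge)
  refine ⟨⟨⟨ψ, hinj⟩, fun {b b'} => (key b b').symm⟩, hψf, ?_⟩
  intro u b hu
  change u ≤ ψ b at hu
  by_cases hb : ∃ a : ↥A, f a = b
  · obtain ⟨a, rfl⟩ := hb
    rw [hψf] at hu
    have hmem : u ∈ A := hAstem a.2 hu
    exact ⟨f ⟨u, hmem⟩, hψf ⟨u, hmem⟩⟩
  · rw [hψnr b hb] at hu
    have hu' : (u : U) ≤ w := hu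
    rcases hpastw _ hu' with h | h
    · refine ⟨z, ?_⟩
      show ψ z = u
      rw [hψz]
      exact (Subtype.ext h).symm
    · obtain ⟨x, ⟨a₁, -, rfl⟩, hle⟩ := h
      have h1 : u ≤ (a₁ : S) := Subtype.coe_le_coe.mp hle
      have hmem : u ∈ A := hAstem a₁.2 h1
      exact ⟨f ⟨u, hmem⟩, hψf ⟨u, hmem⟩⟩

end Part1

section Part2

variable {S : Type*} {T : Type*} [PartialOrder S] [PartialOrder T]

/-- A finite partial isomorphism between stems. -/
structure PartIso (S T : Type*) [PartialOrder S] [PartialOrder T] where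
  A : Set S
  C : Set T
  hAfin : A.Finite
  hCfin : C.Finite
  hAstem : IsStemIn A
  hCstem : IsStemIn C
  φ : S → T
  hmaps : Set.MapsTo φ A C
  hinj : Set.InjOn φ A
  hsurj : Set.SurjOn φ A C
  hord : ∀ ⦃a a'⦄, a ∈ A → a' ∈ A → (a ≤ a' ↔ φ a ≤ φ a')

namespace PartIso

variable [Nonempty S] [Nonempty T]

def Extends (G' G : PartIso S T) : Prop :=
  G.A ⊆ G'.A ∧ G.C ⊆ G'.C ∧ Set.EqOn G'.φ G.φ G.A

lemma Extends.refl (G : PartIso S T) : G.Extends G :=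
  ⟨Set.Subset.refl _, Set.Subset.refl _, fun _ _ => rfl⟩

lemma Extends.trans {G G' G'' : PartIso S T} (h2 : G''.Extends G') (h1 : G'.Extends G) :
    G''.Extends G :=
  ⟨h1.1.trans h2.1, h1.2.1.trans h2.2.1,
    fun s hs => (h2.2.2 (h1.1 hs)).trans (h1.2.2 hs)⟩

noncomputable def ρ (G : PartIso S T) : T → S := Function.invFunOn G.φ G.A

lemma hρA (G : PartIso S T) : ∀ c ∈ G.C, G.ρ c ∈ G.A := by
  intro c hc
  obtain ⟨a, ha, hac⟩ := G.hsurj hc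
  exact Function.invFunOn_mem ⟨a, ha, hac⟩

lemma hφρ (G : PartIso S T) : ∀ c ∈ G.C, G.φ (G.ρ c) = c := by
  intro c hc
  obtain ⟨a, ha, hac⟩ := G.hsurj hc
  exact Function.invFunOn_eq ⟨a, ha, hac⟩

lemma hρφ (G : PartIso S T) : ∀ a ∈ G.A, G.ρ (G.φ a) = a := by
  intro a ha
  exact G.hinj (G.hρA _ (G.hmaps ha)) ha (G.hφρ _ (G.hmaps ha))

noncomputable def flip (G : PartIso S T) : PartIso T S where
  A := G.C
  C := G.A
  hAfin := G.hCfin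
  hCfin := G.hAfin
  hAstem := G.hCstem
  hCstem := G.hAstem
  φ := G.ρ
  hmaps := fun c hc => G.hρA c hc
  hinj := fun c hc c' hc' h => by rw [← G.hφρ c hc, ← G.hφρ c' hc', h]
  hsurj := fun a ha => ⟨G.φ a, G.hmaps ha, G.hρφ a ha⟩
  hord := by
    intro c c' hc hc'
    have h := G.hord (G.hρA _ hc) (G.hρA _ hc')
    rw [G.hφρ _ hc, G.hφρ _ hc'] at h
    exact h.symm

lemma extend_point (hT : RealizesOnePointExt T) (G : PartIso S T) (y : S)
    (hy : y ∉ G.A) (hpast : ∀ u : S, u ≤ y → u = y ∨ u ∈ G.A) :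
    ∃ G' : PartIso S T, G'.Extends G ∧ G'.A = insert y G.A := by
  classical
  set A' : Set S := insert y G.A with hA'
  have hA'fin : A'.Finite := G.hAfin.insert y
  haveI : Finite ↥A' := hA'fin.to_subtype
  have hρmem : ∀ c : ↥G.C, G.ρ ↑c ∈ A' := fun c => Set.mem_insert_of_mem _ (G.hρA _ c.2)
  have hρord : ∀ c c' : ↥G.C, (G.ρ ↑c ≤ G.ρ ↑c' ↔ (c : T) ≤ c') := by
    intro c c'
    have h := G.hord (G.hρA _ c.2) (G.hρA _ c'.2)
    rw [G.hφρ _ c.2, G.hφρ _ c'.2] at h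
    exact h
  let f : G.C ↪o ↥A' :=
    ⟨⟨fun c => ⟨G.ρ ↑c, hρmem c⟩, by
      intro c c' h
      have h1 : G.ρ ↑c = G.ρ ↑c' := congrArg Subtype.val h
      have h2 : (c : T) = ↑c' := by rw [← G.hφρ _ c.2, ← G.hφρ _ c'.2, h1]
      exact Subtype.ext h2⟩, by
      intro c c'
      change G.ρ ↑c ≤ G.ρ ↑c' ↔ _
      rw [hρord]
      exact Subtype.coe_le_coe⟩
  have hst : ∀ (b : ↥A') (c : ↥G.C), b ≤ f c → ∃ c' : ↥G.C, f c' = b := by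
    intro b c hb
    have hbs : (b : S) ≤ G.ρ ↑c := hb
    have hbA : (b : S) ∈ G.A := G.hAstem (G.hρA _ c.2) hbs
    exact ⟨⟨G.φ ↑b, G.hmaps hbA⟩, Subtype.ext (G.hρφ _ hbA)⟩
  have hACcard : G.C.ncard = G.A.ncard := by
    have himg : G.φ '' G.A = G.C := Set.Subset.antisymm (G.hmaps.image_subset) G.hsurj
    rw [← himg, Set.ncard_image_of_injOn G.hinj]
  have hcard : Nat.card ↥A' = G.C.ncard + 1 := by
    rw [Nat.card_coe_set_eq, hA', Set.ncard_insert_of_notMem hy G.hAfin, hACcard]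
  obtain ⟨g, hgfix, hgstem⟩ := realizes_apply hT G.C G.hCfin G.hCstem ↥A' f hst hcard
  set t : T := g ⟨y, Set.mem_insert y _⟩ with ht
  have hgA : ∀ (s : S) (hs : s ∈ G.A), g ⟨s, Set.mem_insert_of_mem _ hs⟩ = G.φ s := by
    intro s hs
    have h1 : f ⟨G.φ s, G.hmaps hs⟩ = ⟨s, Set.mem_insert_of_mem _ hs⟩ :=
      Subtype.ext (G.hρφ s hs)
    rw [← h1, hgfix]
  have hrange : ∀ b : ↥A', g b ∈ insert t G.C := by
    rintro ⟨s, hs⟩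
    rcases hs with rfl | hs
    · exact Set.mem_insert _ _
    · rw [hgA s hs]
      exact Set.mem_insert_of_mem _ (G.hmaps hs)
  set φ' : S → T := fun s => if h : s ∈ A' then g ⟨s, h⟩ else G.φ s with hφ'def
  have hφ' : ∀ (s : S) (h : s ∈ A'), φ' s = g ⟨s, h⟩ := fun s h => dif_pos h
  have hAstem' : IsStemIn A' := by
    intro u x hx hu
    rcases hx with rfl | hx
    · rcases hpast u hu with rfl | h
      · exact Set.mem_insert _ _
      · exact Set.mem_insert_of_mem _ h
    · exact Set.mem_insert_of_mem _ (G.hAstem hx hu)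
  have hCstem' : IsStemIn (insert t G.C) := by
    intro u x hx hu
    have hxg : ∃ b : ↥A', g b = x := by
      rcases hx with rfl | hx
      · exact ⟨⟨y, Set.mem_insert y _⟩, rfl⟩
      · exact ⟨⟨G.ρ x, hρmem ⟨x, hx⟩⟩, hgfix ⟨x, hx⟩⟩
    obtain ⟨b, rfl⟩ := hxg
    obtain ⟨b', hb'⟩ := hgstem u b hu
    exact hb' ▸ hrange b'
  have hmaps' : Set.MapsTo φ' A' (insert t G.C) := by
    intro s hs
    rw [hφ' s hs]
    exact hrange ⟨s, hs⟩
  have hinj' : Set.InjOn φ' A' := by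
    intro s hs s' hs' h
    rw [hφ' s hs, hφ' s' hs'] at h
    exact congrArg Subtype.val (g.injective h)
  have hsurj' : Set.SurjOn φ' A' (insert t G.C) := by
    intro c hc
    rcases hc with rfl | hc
    · exact ⟨y, Set.mem_insert y _, (hφ' y (Set.mem_insert y _)).trans rfl⟩
    · obtain ⟨a, ha, rfl⟩ := G.hsurj hc
      exact ⟨a, Set.mem_insert_of_mem _ ha,
        (hφ' a (Set.mem_insert_of_mem _ ha)).trans (hgA a ha)⟩
  have hord' : ∀ ⦃a a' : S⦄, a ∈ A' → a' ∈ A' → (a ≤ a' ↔ φ' a ≤ φ' a') := by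
    intro a a' ha ha'
    rw [hφ' a ha, hφ' a' ha']
    exact ((g.le_iff_le).trans Subtype.mk_le_mk).symm
  exact ⟨PartIso.mk A' (insert t G.C) hA'fin (G.hCfin.insert t) hAstem' hCstem'
      φ' hmaps' hinj' hsurj' hord',
    ⟨Set.subset_insert _ _, Set.subset_insert _ _,
      fun s hs => ((hφ' s (Set.mem_insert_of_mem _ hs)).trans (hgA s hs))⟩, rfl⟩

lemma extend_left (hpS : ∀ x : S, {s : S | s ≤ x}.Finite) (hT : RealizesOnePointExt T)
    (G : PartIso S T) (x : S) : ∃ G' : PartIso S T, G'.Extends G ∧ x ∈ G'.A := by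
  classical
  suffices aux : ∀ (n : ℕ) (G : PartIso S T), (dCl (insert x G.A) \ G.A).ncard ≤ n →
      ∃ G' : PartIso S T, G'.Extends G ∧ x ∈ G'.A from aux _ G le_rfl
  intro n
  induction n with
  | zero =>
    intro G hle
    by_cases hx : x ∈ G.A
    · exact ⟨G, Extends.refl G, hx⟩
    · exfalso
      have hfin : (dCl (insert x G.A) \ G.A).Finite :=
        (dCl_finite hpS (G.hAfin.insert x)).diff
      have hne : (dCl (insert x G.A) \ G.A).Nonempty :=
        ⟨x, subset_dCl _ (Set.mem_insert x _), hx⟩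
      have := (Set.ncard_pos hfin).mpr hne
      omega
  | succ n ih =>
    intro G hle
    by_cases hx : x ∈ G.A
    · exact ⟨G, Extends.refl G, hx⟩
    set Dd := dCl (insert x G.A) \ G.A with hDd
    have hDdfin : Dd.Finite := (dCl_finite hpS (G.hAfin.insert x)).diff
    have hxD : x ∈ Dd := ⟨subset_dCl _ (Set.mem_insert x _), hx⟩
    obtain ⟨y, hyD, hymin⟩ : ∃ y ∈ Dd, ∀ u ∈ Dd, u ≤ y → y = u := by
      obtain ⟨y, hy⟩ := hDdfin.isPWO.exists_minimal ⟨x, hxD⟩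
      exact ⟨y, hy.prop, fun u hu h => (hy.eq_of_le hu h).symm⟩
    have hyA : y ∉ G.A := hyD.2
    have hpast : ∀ u : S, u ≤ y → u = y ∨ u ∈ G.A := by
      intro u hu
      by_cases huA : u ∈ G.A
      · exact Or.inr huA
      · left
        have h1 : u ∈ dCl (insert x G.A) := dCl_stem _ hyD.1 hu
        exact (hymin u ⟨h1, huA⟩ hu).symm
    obtain ⟨G1, hG1ext, hG1A⟩ := extend_point hT G y hyA hpast
    have hcl : dCl (insert x G1.A) = dCl (insert x G.A) := by
      rw [hG1A]
      apply Set.Subset.antisymm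
      · apply dCl_subset_of_stem _ (dCl_stem _)
        intro s hs
        rcases hs with rfl | hs
        · exact subset_dCl _ (Set.mem_insert s _)
        · rcases hs with rfl | hs
          · exact hyD.1
          · exact subset_dCl _ (Set.mem_insert_of_mem _ hs)
      · exact dCl_mono (fun s hs => by
          rcases hs with rfl | hs
          · exact Set.mem_insert s _
          · exact Set.mem_insert_of_mem _ (Set.mem_insert_of_mem _ hs))
    have hle1 : (dCl (insert x G1.A) \ G1.A).ncard ≤ n := by
      rw [hcl, hG1A]
      have hdiff : dCl (insert x G.A) \ insert y G.A = Dd \ {y} := by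
        ext u
        simp only [hDd, Set.mem_diff, Set.mem_insert_iff, Set.mem_singleton_iff]
        tauto
      rw [hdiff, Set.ncard_diff_singleton_of_mem hyD]
      omega
    obtain ⟨G2, hG2ext, hG2x⟩ := ih G1 hle1
    exact ⟨G2, hG2ext.trans hG1ext, hG2x⟩

lemma extend_right (hpT : ∀ x : T, {s : T | s ≤ x}.Finite) (hS : RealizesOnePointExt S)
    (G : PartIso S T) (t : T) : ∃ G' : PartIso S T, G'.Extends G ∧ t ∈ G'.C := by
  obtain ⟨H, hH, ht⟩ := extend_left hpT hS G.flip t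
  refine ⟨H.flip, ⟨hH.2.1, hH.1, ?_⟩, ht⟩
  intro a ha
  have hGa : G.φ a ∈ G.C := G.hmaps ha
  have h1 : H.φ (G.φ a) = a := by
    have h2 := hH.2.2 (show G.φ a ∈ G.flip.A from hGa)
    rw [h2]
    exact G.hρφ a ha
  have hmem : G.φ a ∈ H.A := hH.1 hGa
  show H.ρ a = G.φ a
  have h3 : H.ρ a ∈ H.A := Function.invFunOn_mem ⟨G.φ a, hmem, h1⟩
  have h4 : H.φ (H.ρ a) = a := Function.invFunOn_eq ⟨G.φ a, hmem, h1⟩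
  exact H.hinj h3 hmem (h4.trans h1.symm)

end PartIso

theorem iso_of_realizes [Countable S] [Countable T]
    (hpS : ∀ x : S, {s : S | s ≤ x}.Finite) (hpT : ∀ x : T, {s : T | s ≤ x}.Finite)
    (hS : RealizesOnePointExt S) (hT : RealizesOnePointExt T) : Nonempty (S ≃o T) := by
  classical
  haveI : Nonempty S := nonempty_of_realizes hS
  haveI : Nonempty T := nonempty_of_realizes hT
  obtain ⟨eS, heS⟩ := exists_surjective_nat S
  obtain ⟨eT, heT⟩ := exists_surjective_nat T
  have hstep : ∀ (G : PartIso S T) (n : ℕ),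
      ∃ G' : PartIso S T, G'.Extends G ∧ eS n ∈ G'.A ∧ eT n ∈ G'.C := by
    intro G n
    obtain ⟨G1, h1, hx⟩ := PartIso.extend_left hpS hT G (eS n)
    obtain ⟨G2, h2, ht⟩ := PartIso.extend_right hpT hS G1 (eT n)
    exact ⟨G2, h2.trans h1, h2.1 hx, ht⟩
  let G0 : PartIso S T :=
    { A := ∅, C := ∅, hAfin := Set.finite_empty, hCfin := Set.finite_empty,
      hAstem := fun y x hx _ => absurd hx (Set.notMem_empty x),
      hCstem := fun y x hx _ => absurd hx (Set.notMem_empty x),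
      φ := fun _ => Classical.arbitrary T,
      hmaps := fun s hs => absurd hs (Set.notMem_empty s),
      hinj := fun s hs => absurd hs (Set.notMem_empty s),
      hsurj := fun c hc => absurd hc (Set.notMem_empty c),
      hord := fun a a' ha => absurd ha (Set.notMem_empty a) }
  let seq : ℕ → PartIso S T := fun n => Nat.rec G0 (fun n G => Classical.choose (hstep G n)) n
  have hseq : ∀ n, (seq (n + 1)).Extends (seq n) ∧ eS n ∈ (seq (n + 1)).A ∧
      eT n ∈ (seq (n + 1)).C := fun n => Classical.choose_spec (hstep (seq n) n)
  have hchain : ∀ m n, m ≤ n → (seq n).Extends (seq m) := by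
    intro m n h
    induction n, h using Nat.le_induction with
    | base => exact PartIso.Extends.refl _
    | succ n hmn ih => exact (hseq n).1.trans ih
  have hidx : ∀ s : S, ∃ n, s ∈ (seq n).A := by
    intro s
    obtain ⟨n, rfl⟩ := heS s
    exact ⟨n + 1, (hseq n).2.1⟩
  have hidxT : ∀ t : T, ∃ n, t ∈ (seq n).C := by
    intro t
    obtain ⟨n, rfl⟩ := heT t
    exact ⟨n + 1, (hseq n).2.2⟩
  let idx : S → ℕ := fun s => Classical.choose (hidx s)
  let Φ : S → T := fun s => (seq (idx s)).φ s
  have hmem : ∀ s, s ∈ (seq (idx s)).A := fun s => Classical.choose_spec (hidx s)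
  have hΦeq : ∀ (m : ℕ) (s : S), s ∈ (seq m).A → (seq m).φ s = Φ s := by
    intro m s hs
    have h1 := (hchain m (max m (idx s)) (le_max_left _ _)).2.2 hs
    have h2 := (hchain (idx s) (max m (idx s)) (le_max_right _ _)).2.2 (hmem s)
    exact h1.symm.trans h2
  have hinj : Function.Injective Φ := by
    intro s s' h
    obtain ⟨m, hm⟩ := hidx s
    obtain ⟨m', hm'⟩ := hidx s'
    have hs : s ∈ (seq (max m m')).A := (hchain m _ (le_max_left _ _)).1 hm
    have hs' : s' ∈ (seq (max m m')).A := (hchain m' _ (le_max_right _ _)).1 hm'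
    apply (seq (max m m')).hinj hs hs'
    rw [hΦeq _ s hs, hΦeq _ s' hs', h]
  have hsurjΦ : Function.Surjective Φ := by
    intro t
    obtain ⟨m, hm⟩ := hidxT t
    obtain ⟨s, hsA, hst⟩ := (seq m).hsurj hm
    exact ⟨s, (hΦeq m s hsA).symm.trans hst⟩
  have hordΦ : ∀ s s' : S, Φ s ≤ Φ s' ↔ s ≤ s' := by
    intro s s'
    obtain ⟨m, hm⟩ := hidx s
    obtain ⟨m', hm'⟩ := hidx s'
    have hs : s ∈ (seq (max m m')).A := (hchain m _ (le_max_left _ _)).1 hm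
    have hs' : s' ∈ (seq (max m m')).A := (hchain m' _ (le_max_right _ _)).1 hm'
    rw [← hΦeq _ s hs, ← hΦeq _ s' hs']
    exact ((seq (max m m')).hord hs hs').symm
  exact ⟨{ toEquiv := Equiv.ofBijective Φ ⟨hinj, hsurjΦ⟩,
           map_rel_iff' := fun {a b} => hordΦ a b }⟩

end Part2

/-- Removing a finite set from a countable past-finite causal set
realizing all one-point stem-extensions yields a causal set with the same
property; in particular it is order-isomorphic to the original. -/
theorem stmt_16 {U : Type*} [PartialOrder U] [Countable U]
    (hpf : ∀ x : U, {s : U | s ≤ x}.Finite)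
    (hreal : RealizesOnePointExt U)
    (F : Set U) (hF : F.Finite) :
    RealizesOnePointExt {x : U // x ∉ F} ∧
      Nonempty ({x : U // x ∉ F} ≃o U) := by
  have part1 := realizes_diff hpf hreal F hF
  have hpS : ∀ x : {x : U // x ∉ F}, {s : {x : U // x ∉ F} | s ≤ x}.Finite := by
    intro x
    have h : (Subtype.val ⁻¹' {u : U | u ≤ ↑x} : Set {x : U // x ∉ F}).Finite :=
      Set.Finite.preimage (fun a _ b _ h => Subtype.val_injective h) (hpf ↑x)
    exact h.subset (fun s hs => Subtype.coe_le_coe.mpr hs)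
  exact ⟨part1, iso_of_realizes hpS hpf part1 hreal⟩
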